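/- For all real x and y, the Goldstein-Price function f(x,y) ≥ 3, with equality if and only if (x,y) = (0,-1); in particular f(0,-1) = 3 is the global minimum. -/
import Mathlib


noncomputable def goldsteinPrice (x y : ℝ) : ℝ :=
  (1 + (x + y + 1)^2 * (19 - 14*x + 3*x^2 - 14*y + 6*x*y + 3*y^2)) *
  (30 + (2*x - 3*y)^2 * (18 - 32*x + 12*x^2 + 48*y - 36*x*y + 27*y^2))

theorem stmt_7 :
    goldsteinPrice 0 (-1) = 3 ∧
    ∀ x y : ℝ, goldsteinPrice x y ≥ 3 ∧ (goldsteinPrice x y = 3 ↔ (x, y) = (0, -1)) := by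
  constructor
  · norm_num [goldsteinPrice]
  intro x y
  have hA : 1 + (x + y + 1)^2 * (19 - 14*x + 3*x^2 - 14*y + 6*x*y + 3*y^2) ≥ 1 := by
    nlinarith [sq_nonneg (x+y+1), mul_nonneg (sq_nonneg (x+y+1)) (sq_nonneg (3*(x+y)-7))]
  have hB : 30 + (2*x - 3*y)^2 * (18 - 32*x + 12*x^2 + 48*y - 36*x*y + 27*y^2) ≥ 3 := by
    nlinarith [sq_nonneg (2*x-3*y-3),
      mul_nonneg (sq_nonneg (2*x-3*y-3)) (sq_nonneg (3*(2*x-3*y)+1))]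
  have hge : goldsteinPrice x y ≥ 3 := by
    unfold goldsteinPrice; nlinarith [hA, hB]
  refine ⟨hge, ?_, ?_⟩
  · intro h
    unfold goldsteinPrice at h
    set A := 1 + (x + y + 1)^2 * (19 - 14*x + 3*x^2 - 14*y + 6*x*y + 3*y^2) with hAdef
    set B := 30 + (2*x - 3*y)^2 * (18 - 32*x + 12*x^2 + 48*y - 36*x*y + 27*y^2) with hBdef
    have hA1 : A = 1 := by nlinarith [hA, hB]
    have hB3 : B = 3 := by nlinarith [hA, hB]
    have h1 : x + y + 1 = 0 := by
      have h0 : (x + y + 1)^2 * (19 - 14*x + 3*x^2 - 14*y + 6*x*y + 3*y^2) = 0 := by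
        rw [hAdef] at hA1; linarith
      nlinarith [sq_nonneg (x+y+1), mul_nonneg (sq_nonneg (x+y+1)) (sq_nonneg (3*(x+y)-7)),
        sq_nonneg (3*(x+y)-7)]
    have h2 : 2*x - 3*y - 3 = 0 := by
      have h0 : (2*x - 3*y)^2 * (18 - 32*x + 12*x^2 + 48*y - 36*x*y + 27*y^2) = -27 := by
        rw [hBdef] at hB3; linarith
      nlinarith [sq_nonneg (2*x-3*y-3),
        mul_nonneg (sq_nonneg (2*x-3*y-3)) (sq_nonneg (3*(2*x-3*y)+1))]
    have hx : x = 0 := by linarith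
    have hy : y = -1 := by linarith
    simp [hx, hy]
  · rintro h
    have hx : x = 0 := (Prod.mk.injEq _ _ _ _ ▸ h).1
    have hy : y = -1 := (Prod.mk.injEq _ _ _ _ ▸ h).2
    subst hx; subst hy
    norm_num [goldsteinPrice]
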